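/- Let ξ : ℝ³ → ℝ be a Schwartz function (or any function whose Fourier transform satisfies ∫|r ξ̂(r)| dr < ∞), and for R > 0 set ξ_R(x) = ξ(x/R). Then the operator norm of the commutator [ξ_R, |D⁰|] on L²(ℝ³, ℂ⁴) is bounded by (C/R) ∫_{ℝ³} |r ξ̂₁(r)| dr for a constant C independent of R; in particular ‖[ξ_R, |D⁰|]‖ = O(1/R) as R → ∞. -/

import Mathlib

open MeasureTheory Real
open scoped ENNReal NNReal

noncomputable section

/-- The relativistic dispersion relation `E(p) = √(1+|p|²)`. -/
def disp (p : EuclideanSpace ℝ (Fin 3)) : ℝ := Real.sqrt (1 + ‖p‖ ^ 2)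

local notation "E3" => EuclideanSpace ℝ (Fin 3)

lemma disp_le (p q : EuclideanSpace ℝ (Fin 3)) : disp q ≤ disp p + ‖p - q‖ := by
  have h1 : ‖q‖ ≤ ‖p‖ + ‖p - q‖ := by
    linarith [abs_le.mp (abs_norm_sub_norm_le q p) |>.2, norm_sub_rev q p ▸ le_refl ‖q - p‖,
      (norm_sub_rev q p).le]
  have hp : ‖p‖ ≤ disp p := by
    rw [disp]
    nlinarith [Real.sq_sqrt (by positivity : (0:ℝ) ≤ 1 + ‖p‖^2),
      Real.sqrt_nonneg (1 + ‖p‖^2), norm_nonneg p]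
  have hd : disp p ≥ 0 := Real.sqrt_nonneg _
  have : disp q ≤ Real.sqrt ((disp p + ‖p - q‖) ^ 2) := by
    apply Real.sqrt_le_sqrt
    have hq0 : (0:ℝ) ≤ ‖q‖ := norm_nonneg q
    have hpq0 : (0:ℝ) ≤ ‖p - q‖ := norm_nonneg _
    have hsq : disp p ^ 2 = 1 + ‖p‖ ^ 2 := Real.sq_sqrt (by positivity)
    nlinarith [hp, hd]
  rwa [Real.sqrt_sq (by positivity)] at this

lemma disp_lip (p q : EuclideanSpace ℝ (Fin 3)) : |disp q - disp p| ≤ ‖p - q‖ := by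
  rw [abs_sub_le_iff]
  constructor
  · linarith [disp_le p q]
  · have := disp_le q p
    rw [norm_sub_rev] at this
    linarith

lemma half_half (x : ℝ≥0∞) : x ^ (1/2 : ℝ) * x ^ (1/2 : ℝ) = x := by
  rw [← sq, ← ENNReal.rpow_natCast (x ^ (1/2:ℝ)) 2, ← ENNReal.rpow_mul]
  norm_num

lemma lint_sub_left (h : EuclideanSpace ℝ (Fin 3) → ℝ≥0∞) (p : EuclideanSpace ℝ (Fin 3)) :
    ∫⁻ q, h (p - q) = ∫⁻ q, h q := by
  have : ∀ q : EuclideanSpace ℝ (Fin 3), p - q = -(q - p) := fun q => by abel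
  calc ∫⁻ q, h (p - q) = ∫⁻ q, (h ∘ Neg.neg) (q - p) := by
        simp only [Function.comp, this]
    _ = ∫⁻ q, (h ∘ Neg.neg) q := lintegral_sub_right_eq_self _ p
    _ = ∫⁻ q, h q := by
        calc ∫⁻ q, (h ∘ Neg.neg) q = ∫⁻ q, h q ∂(Measure.map (Neg.neg) volume) :=
              (lintegral_map_equiv h (MeasurableEquiv.neg _)).symm ▸ rfl
          _ = ∫⁻ q, h q := by rw [Measure.map_neg_eq_self]

/-- The commutator `[ξ_R, |D⁰|]` on `L²(ℝ³, ℂ⁴)`, expressed through its quadratic form in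
Fourier variables: if `ξ_R(x) = ξ(x/R)` then `ξ̂_R(r) = R³ ξ̂(Rr)`, and
`⟨f, [ξ_R, |D⁰|] g⟩ = ∫∫ ξ̂_R(p−q) ⟨f̂(p), ĝ(q)⟩ (E(q)−E(p)) dp dq`.  Its operator norm is
bounded by `(1/R) ∫ |r ξ̂₁(r)| dr`, hence is `O(1/R)` as `R → ∞`. -/
theorem stmt_1 (ξhat : EuclideanSpace ℝ (Fin 3) → ℂ)
    (hmeas : AEStronglyMeasurable ξhat volume)
    (hmom : Integrable (fun r : EuclideanSpace ℝ (Fin 3) => ‖r‖ * ‖ξhat r‖))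
    (R : ℝ) (hR : 0 < R)
    (f g : EuclideanSpace ℝ (Fin 3) → EuclideanSpace ℂ (Fin 4))
    (hf : MemLp f 2 volume) (hg : MemLp g 2 volume) :
    ‖∫ p : EuclideanSpace ℝ (Fin 3), ∫ q : EuclideanSpace ℝ (Fin 3),
        ((R ^ 3 : ℝ) : ℂ) * ξhat (R • (p - q)) * (inner ℂ (f p) (g q) : ℂ)
          * ((disp q - disp p : ℝ) : ℂ)‖
      ≤ (1 / R) * (∫ r : EuclideanSpace ℝ (Fin 3), ‖r‖ * ‖ξhat r‖)
          * (eLpNorm f 2 volume).toReal * (eLpNorm g 2 volume).toReal := by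
  set μ : Measure E3 := volume with hμ
  set I : ℝ := ∫ r : E3, ‖r‖ * ‖ξhat r‖ with hI
  have hI0 : 0 ≤ I := integral_nonneg fun r => by positivity
  set a : E3 → ℝ≥0∞ := fun p => (‖f p‖₊ : ℝ≥0∞) with ha_def
  set b : E3 → ℝ≥0∞ := fun q => (‖g q‖₊ : ℝ≥0∞) with hb_def
  set φ : E3 → ℝ≥0∞ := fun r => (‖r‖₊ : ℝ≥0∞) * (‖ξhat r‖₊ : ℝ≥0∞) with hφ_def
  set ψ : E3 → ℝ≥0∞ := fun r => φ (R • r) with hψ_def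
  -- measurability
  have hφm : AEMeasurable φ μ :=
    (measurable_nnnorm.coe_nnreal_ennreal).aemeasurable.mul hmeas.enorm
  have hψm : AEMeasurable ψ μ :=
    hφm.comp_quasiMeasurePreserving (Measure.quasiMeasurePreserving_smul μ hR.ne')
  have hKm : AEMeasurable (fun z : E3 × E3 => ψ (z.1 - z.2)) (μ.prod μ) :=
    hψm.comp_quasiMeasurePreserving (quasiMeasurePreserving_sub μ μ)
  have ham : AEMeasurable a μ := hf.1.enorm
  have hbm : AEMeasurable b μ := hg.1.enorm
  have hamP : AEMeasurable (fun z : E3 × E3 => a z.1) (μ.prod μ) :=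
    ham.comp_quasiMeasurePreserving Measure.quasiMeasurePreserving_fst
  have hbmP : AEMeasurable (fun z : E3 × E3 => b z.2) (μ.prod μ) :=
    hbm.comp_quasiMeasurePreserving Measure.quasiMeasurePreserving_snd
  -- pointwise bound
  have key : ∀ p q : E3,
      (‖((R ^ 3 : ℝ) : ℂ) * ξhat (R • (p - q)) * (inner ℂ (f p) (g q) : ℂ)
          * ((disp q - disp p : ℝ) : ℂ)‖₊ : ℝ≥0∞)
        ≤ ENNReal.ofReal (R ^ 2) * (ψ (p - q) * (a p * b q)) := by
    intro p q
    have hreal : ‖((R ^ 3 : ℝ) : ℂ) * ξhat (R • (p - q)) * (inner ℂ (f p) (g q) : ℂ)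
          * ((disp q - disp p : ℝ) : ℂ)‖
        ≤ R ^ 2 * ((‖R • (p - q)‖ * ‖ξhat (R • (p - q))‖) * (‖f p‖ * ‖g q‖)) := by
      have h1 : ‖((R ^ 3 : ℝ) : ℂ) * ξhat (R • (p - q)) * (inner ℂ (f p) (g q) : ℂ)
          * ((disp q - disp p : ℝ) : ℂ)‖
          = R ^ 3 * ‖ξhat (R • (p - q))‖ * ‖(inner ℂ (f p) (g q) : ℂ)‖ * |disp q - disp p| := by
        rw [norm_mul, norm_mul, norm_mul, Complex.norm_real, Complex.norm_real,
          Real.norm_eq_abs, Real.norm_eq_abs, abs_of_pos (pow_pos hR 3)]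
      rw [h1]
      have h2 : ‖(inner ℂ (f p) (g q) : ℂ)‖ ≤ ‖f p‖ * ‖g q‖ := norm_inner_le_norm _ _
      have h3 : |disp q - disp p| ≤ ‖p - q‖ := disp_lip p q
      have h4 : ‖R • (p - q)‖ = R * ‖p - q‖ := by
        rw [norm_smul, Real.norm_eq_abs, abs_of_pos hR]
      have h5 : R ^ 3 * ‖ξhat (R • (p - q))‖ * (‖f p‖ * ‖g q‖) * ‖p - q‖
          = R ^ 2 * ((‖R • (p - q)‖ * ‖ξhat (R • (p - q))‖) * (‖f p‖ * ‖g q‖)) := by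
        rw [h4]; ring
      calc R ^ 3 * ‖ξhat (R • (p - q))‖ * ‖(inner ℂ (f p) (g q) : ℂ)‖ * |disp q - disp p|
          ≤ R ^ 3 * ‖ξhat (R • (p - q))‖ * (‖f p‖ * ‖g q‖) * ‖p - q‖ := by
            gcongr
        _ = _ := h5
    calc (‖((R ^ 3 : ℝ) : ℂ) * ξhat (R • (p - q)) * (inner ℂ (f p) (g q) : ℂ)
          * ((disp q - disp p : ℝ) : ℂ)‖₊ : ℝ≥0∞)
        = ENNReal.ofReal ‖((R ^ 3 : ℝ) : ℂ) * ξhat (R • (p - q)) * (inner ℂ (f p) (g q) : ℂ)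
          * ((disp q - disp p : ℝ) : ℂ)‖ := (ofReal_norm _).symm
      _ ≤ ENNReal.ofReal (R ^ 2 * ((‖R • (p - q)‖ * ‖ξhat (R • (p - q))‖) * (‖f p‖ * ‖g q‖))) :=
          ENNReal.ofReal_le_ofReal hreal
      _ = ENNReal.ofReal (R ^ 2) * (ψ (p - q) * (a p * b q)) := by
          rw [ENNReal.ofReal_mul (by positivity), ENNReal.ofReal_mul (by positivity),
            ENNReal.ofReal_mul (norm_nonneg _), ENNReal.ofReal_mul (norm_nonneg _)]
          simp only [hψ_def, hφ_def, ha_def, hb_def, ofReal_norm, enorm_eq_nnnorm]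

  -- abbreviations
  set S : ℝ≥0∞ := ∫⁻ p, ∫⁻ q, ψ (p - q) * (a p * b q) ∂μ ∂μ with hS_def
  set Iψ : ℝ≥0∞ := ∫⁻ r, ψ r ∂μ with hIψ_def
  set A : ℝ≥0∞ := ∫⁻ p, a p ^ (2:ℝ) ∂μ with hA_def
  set B : ℝ≥0∞ := ∫⁻ q, b q ^ (2:ℝ) ∂μ with hB_def
  -- step A : bound the norm by lintegrals
  have stepA : (‖∫ p : E3, ∫ q : E3, ((R ^ 3 : ℝ) : ℂ) * ξhat (R • (p - q))
        * (inner ℂ (f p) (g q) : ℂ) * ((disp q - disp p : ℝ) : ℂ) ∂μ ∂μ‖₊ : ℝ≥0∞)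
      ≤ ENNReal.ofReal (R ^ 2) * S := by
    calc (‖∫ p : E3, ∫ q : E3, ((R ^ 3 : ℝ) : ℂ) * ξhat (R • (p - q))
        * (inner ℂ (f p) (g q) : ℂ) * ((disp q - disp p : ℝ) : ℂ) ∂μ ∂μ‖₊ : ℝ≥0∞)
        ≤ ∫⁻ p, (‖∫ q : E3, ((R ^ 3 : ℝ) : ℂ) * ξhat (R • (p - q))
            * (inner ℂ (f p) (g q) : ℂ) * ((disp q - disp p : ℝ) : ℂ) ∂μ‖₊ : ℝ≥0∞) ∂μ :=
          enorm_integral_le_lintegral_enorm _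
      _ ≤ ∫⁻ p, ∫⁻ q, (‖((R ^ 3 : ℝ) : ℂ) * ξhat (R • (p - q))
            * (inner ℂ (f p) (g q) : ℂ) * ((disp q - disp p : ℝ) : ℂ)‖₊ : ℝ≥0∞) ∂μ ∂μ :=
          lintegral_mono fun p => enorm_integral_le_lintegral_enorm _
      _ ≤ ∫⁻ p, ∫⁻ q, ENNReal.ofReal (R ^ 2) * (ψ (p - q) * (a p * b q)) ∂μ ∂μ :=
          lintegral_mono fun p => lintegral_mono fun q => key p q
      _ = ENNReal.ofReal (R ^ 2) * S := by
          simp_rw [lintegral_const_mul' (ENNReal.ofReal (R ^ 2)) _ ENNReal.ofReal_ne_top]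
          rfl
  -- value of ∫⁻ φ
  have hIφ : ∫⁻ r, φ r ∂μ = ENNReal.ofReal I := by
    rw [hI, ofReal_integral_eq_lintegral_ofReal hmom (ae_of_all _ fun r => by positivity)]
    refine lintegral_congr fun r => ?_
    rw [ENNReal.ofReal_mul (norm_nonneg _), ofReal_norm, ofReal_norm]
    rfl
  -- value of Iψ by scaling
  have hfin3 : Module.finrank ℝ E3 = 3 := by simp
  have hmap : Measure.map (fun r : E3 => R • r) μ = ENNReal.ofReal ((R ^ 3)⁻¹) • μ := by
    have h := Measure.map_addHaar_smul (E := E3) μ hR.ne'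
    rw [hfin3] at h
    rw [h, abs_of_nonneg (by positivity)]
  have hIψ : Iψ = ENNReal.ofReal ((R ^ 3)⁻¹) * ENNReal.ofReal I := by
    have hφm' : AEMeasurable φ (Measure.map (fun r : E3 => R • r) μ) := by
      rw [hmap]; exact hφm.mono_ac (Measure.absolutelyContinuous_of_le_smul le_rfl)
    calc Iψ = ∫⁻ s, φ s ∂(Measure.map (fun r : E3 => R • r) μ) :=
          (lintegral_map' hφm' (measurable_const_smul R).aemeasurable).symm
      _ = ENNReal.ofReal ((R ^ 3)⁻¹) * ∫⁻ r, φ r ∂μ := by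
          rw [hmap, lintegral_smul_measure, smul_eq_mul]
      _ = ENNReal.ofReal ((R ^ 3)⁻¹) * ENNReal.ofReal I := by rw [hIφ]
  -- translation invariance
  have hint1 : ∀ p : E3, ∫⁻ q, ψ (p - q) ∂μ = Iψ := fun p => lint_sub_left ψ p
  have hint2 : ∀ q : E3, ∫⁻ p, ψ (p - q) ∂μ = Iψ := fun q => lintegral_sub_right_eq_self ψ q
  -- eLpNorms
  have hfA : eLpNorm f 2 μ = A ^ (1/2 : ℝ) := by
    rw [eLpNorm_eq_lintegral_rpow_enorm_toReal two_ne_zero ENNReal.ofNat_ne_top]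
    norm_num [hA_def, ha_def]
    rfl
  have hgB : eLpNorm g 2 μ = B ^ (1/2 : ℝ) := by
    rw [eLpNorm_eq_lintegral_rpow_enorm_toReal two_ne_zero ENNReal.ofNat_ne_top]
    norm_num [hB_def, hb_def]
    rfl
  -- Cauchy-Schwarz
  have sqmul : ∀ x y : ℝ≥0∞, (x ^ (1/2:ℝ) * y) ^ (2:ℝ) = x * y ^ (2:ℝ) := by
    intro x y
    rw [ENNReal.mul_rpow_of_nonneg _ _ (by norm_num : (0:ℝ) ≤ 2), ← ENNReal.rpow_mul]
    norm_num
  have hCS : S ≤ Iψ * A ^ (1/2:ℝ) * B ^ (1/2:ℝ) := by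
    have hS_prod : S = ∫⁻ z : E3 × E3, ψ (z.1 - z.2) * (a z.1 * b z.2) ∂(μ.prod μ) := by
      rw [hS_def]
      exact lintegral_lintegral (hKm.mul (hamP.mul hbmP))
    have hF1 : AEMeasurable (fun z : E3 × E3 => (ψ (z.1 - z.2)) ^ (1/2:ℝ) * a z.1) (μ.prod μ) :=
      ((ENNReal.continuous_rpow_const.measurable).comp_aemeasurable hKm).mul hamP
    have hF2 : AEMeasurable (fun z : E3 × E3 => (ψ (z.1 - z.2)) ^ (1/2:ℝ) * b z.2) (μ.prod μ) :=
      ((ENNReal.continuous_rpow_const.measurable).comp_aemeasurable hKm).mul hbmP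
    have hconj : Real.HolderConjugate 2 2 := Real.HolderConjugate.two_two
    have CS := ENNReal.lintegral_mul_le_Lp_mul_Lq (μ.prod μ) hconj hF1 hF2
    have e1 : ∫⁻ z : E3 × E3, ((fun z : E3 × E3 => (ψ (z.1 - z.2)) ^ (1/2:ℝ) * a z.1) *
        (fun z : E3 × E3 => (ψ (z.1 - z.2)) ^ (1/2:ℝ) * b z.2)) z ∂(μ.prod μ)
        = ∫⁻ z : E3 × E3, ψ (z.1 - z.2) * (a z.1 * b z.2) ∂(μ.prod μ) := by
      refine lintegral_congr fun z => ?_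
      simp only [Pi.mul_apply]
      rw [mul_mul_mul_comm, half_half]
    have e2 : ∫⁻ z : E3 × E3, ((ψ (z.1 - z.2)) ^ (1/2:ℝ) * a z.1) ^ (2:ℝ) ∂(μ.prod μ)
        = Iψ * A := by
      have : ∀ z : E3 × E3, ((ψ (z.1 - z.2)) ^ (1/2:ℝ) * a z.1) ^ (2:ℝ)
          = ψ (z.1 - z.2) * a z.1 ^ (2:ℝ) := fun z => sqmul _ _
      have hma : AEMeasurable (fun z : E3 × E3 => ψ (z.1 - z.2) * a z.1 ^ (2:ℝ)) (μ.prod μ) :=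
        hKm.mul ((ENNReal.continuous_rpow_const.measurable).comp_aemeasurable hamP)
      rw [lintegral_congr this, lintegral_prod _ hma]
      calc ∫⁻ p, ∫⁻ q, ψ (p - q) * a p ^ (2:ℝ) ∂μ ∂μ
          = ∫⁻ p, Iψ * a p ^ (2:ℝ) ∂μ := by
            refine lintegral_congr fun p => ?_
            rw [lintegral_mul_const' (a p ^ (2:ℝ)) _
              (ENNReal.rpow_ne_top_of_nonneg (by norm_num) ENNReal.coe_ne_top), hint1 p]
        _ = Iψ * A := lintegral_const_mul' _ _ (by rw [hIψ]; exact ENNReal.mul_ne_top ENNReal.ofReal_ne_top ENNReal.ofReal_ne_top)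
    have e3 : ∫⁻ z : E3 × E3, ((ψ (z.1 - z.2)) ^ (1/2:ℝ) * b z.2) ^ (2:ℝ) ∂(μ.prod μ)
        = Iψ * B := by
      have : ∀ z : E3 × E3, ((ψ (z.1 - z.2)) ^ (1/2:ℝ) * b z.2) ^ (2:ℝ)
          = ψ (z.1 - z.2) * b z.2 ^ (2:ℝ) := fun z => sqmul _ _
      have hmb : AEMeasurable (fun z : E3 × E3 => ψ (z.1 - z.2) * b z.2 ^ (2:ℝ)) (μ.prod μ) :=
        hKm.mul ((ENNReal.continuous_rpow_const.measurable).comp_aemeasurable hbmP)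
      rw [lintegral_congr this, lintegral_prod_symm _ hmb]
      calc ∫⁻ q, ∫⁻ p, ψ (p - q) * b q ^ (2:ℝ) ∂μ ∂μ
          = ∫⁻ q, Iψ * b q ^ (2:ℝ) ∂μ := by
            refine lintegral_congr fun q => ?_
            rw [lintegral_mul_const' (b q ^ (2:ℝ)) _
              (ENNReal.rpow_ne_top_of_nonneg (by norm_num) ENNReal.coe_ne_top), hint2 q]
        _ = Iψ * B := lintegral_const_mul' _ _ (by rw [hIψ]; exact ENNReal.mul_ne_top ENNReal.ofReal_ne_top ENNReal.ofReal_ne_top)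
    rw [hS_prod, ← e1]
    refine CS.trans ?_
    rw [e2, e3]
    rw [ENNReal.mul_rpow_of_nonneg _ _ (by norm_num : (0:ℝ) ≤ 1/2),
      ENNReal.mul_rpow_of_nonneg _ _ (by norm_num : (0:ℝ) ≤ 1/2)]
    refine le_of_eq ?_
    calc Iψ ^ (1/2:ℝ) * A ^ (1/2:ℝ) * (Iψ ^ (1/2:ℝ) * B ^ (1/2:ℝ))
        = (Iψ ^ (1/2:ℝ) * Iψ ^ (1/2:ℝ)) * (A ^ (1/2:ℝ) * B ^ (1/2:ℝ)) := by ring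
      _ = Iψ * A ^ (1/2:ℝ) * B ^ (1/2:ℝ) := by rw [half_half]; ring
  -- assemble
  have hofReal : ENNReal.ofReal (R ^ 2) * Iψ = ENNReal.ofReal (1 / R * I) := by
    rw [hIψ, ← ENNReal.ofReal_mul (by positivity), ← ENNReal.ofReal_mul (by positivity)]
    congr 1
    field_simp
  have hmain : (‖∫ p : E3, ∫ q : E3, ((R ^ 3 : ℝ) : ℂ) * ξhat (R • (p - q))
        * (inner ℂ (f p) (g q) : ℂ) * ((disp q - disp p : ℝ) : ℂ) ∂μ ∂μ‖₊ : ℝ≥0∞)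
      ≤ ENNReal.ofReal (1 / R * I) * eLpNorm f 2 μ * eLpNorm g 2 μ := by
    refine stepA.trans ?_
    calc ENNReal.ofReal (R ^ 2) * S
        ≤ ENNReal.ofReal (R ^ 2) * (Iψ * A ^ (1/2:ℝ) * B ^ (1/2:ℝ)) := by gcongr
      _ = (ENNReal.ofReal (R ^ 2) * Iψ) * A ^ (1/2:ℝ) * B ^ (1/2:ℝ) := by ring
      _ = ENNReal.ofReal (1 / R * I) * eLpNorm f 2 μ * eLpNorm g 2 μ := by
          rw [hofReal, hfA, hgB]
  have hne : ENNReal.ofReal (1 / R * I) * eLpNorm f 2 μ * eLpNorm g 2 μ ≠ ⊤ :=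
    ENNReal.mul_ne_top (ENNReal.mul_ne_top ENNReal.ofReal_ne_top hf.2.ne) hg.2.ne
  have := ENNReal.toReal_mono hne hmain
  rw [ENNReal.toReal_mul, ENNReal.toReal_mul, ENNReal.coe_toReal, coe_nnnorm,
    ENNReal.toReal_ofReal (by positivity)] at this
  calc ‖∫ p : E3, ∫ q : E3, ((R ^ 3 : ℝ) : ℂ) * ξhat (R • (p - q))
        * (inner ℂ (f p) (g q) : ℂ) * ((disp q - disp p : ℝ) : ℂ) ∂μ ∂μ‖
      ≤ 1 / R * I * (eLpNorm f 2 μ).toReal * (eLpNorm g 2 μ).toReal := this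
    _ = 1 / R * I * (eLpNorm f 2 μ).toReal * (eLpNorm g 2 μ).toReal := rfl

end
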